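/- arXiv:1509.03490 — 7 statements merged into one kernel-verified Lean document; each statement's English description precedes it below -/
import Mathlib

section
/- Let F be a field and let A be an invertible n×n matrix over F. Then there exist invertible upper triangular matrices T, T' over F and a permutation matrix P such that A = T P T'. (Bruhat decomposition for GL(n,F).) -/
open Matrix Finset

namespace BruhatAux

variable {F : Type*} [Field F]

/-- Permutation matrix of `σ`. -/
def P {n : ℕ} (σ : Equiv.Perm (Fin n)) : Matrix (Fin n) (Fin n) F :=
  Matrix.of fun i j => if i = σ j then 1 else 0

/-- Extend a matrix by inserting an identity pivot at position `p`. -/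
def ext {n : ℕ} (p : Fin (n + 1)) (M : Matrix (Fin n) (Fin n) F) :
    Matrix (Fin (n + 1)) (Fin (n + 1)) F :=
  Matrix.of fun x y =>
    match finSuccEquiv' p x, finSuccEquiv' p y with
    | none, none => 1
    | some a, some b => M a b
    | _, _ => 0

variable {n : ℕ} (p : Fin (n + 1)) (M : Matrix (Fin n) (Fin n) F)

@[simp] lemma ext_pp : ext p M p p = 1 := by simp [ext]

@[simp] lemma ext_ps (b : Fin n) : ext p M p (p.succAbove b) = 0 := by simp [ext]

@[simp] lemma ext_sp (a : Fin n) : ext p M (p.succAbove a) p = 0 := by simp [ext]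

@[simp] lemma ext_ss (a b : Fin n) : ext p M (p.succAbove a) (p.succAbove b) = M a b := by
  simp [ext]

lemma ext_blockTriangular (hM : M.BlockTriangular id) :
    (ext p M).BlockTriangular id := by
  intro x y hxy
  rcases eq_or_ne x p with rfl | hx
  · rcases eq_or_ne y x with rfl | hy
    · exact absurd hxy (lt_irrefl _)
    · obtain ⟨b, rfl⟩ := Fin.exists_succAbove_eq hy
      simp
  · obtain ⟨a, rfl⟩ := Fin.exists_succAbove_eq hx
    rcases eq_or_ne y p with rfl | hy
    · simp
    · obtain ⟨b, rfl⟩ := Fin.exists_succAbove_eq hy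
      rw [ext_ss]
      exact hM (Fin.succAbove_lt_succAbove_iff.mp hxy)

lemma ext_det (hM : M.BlockTriangular id) : (ext p M).det = M.det := by
  rw [Matrix.det_of_upperTriangular (ext_blockTriangular p M hM),
    Matrix.det_of_upperTriangular hM, Fin.prod_univ_succAbove _ p]
  simp

/-- The key lemma: any invertible matrix can be brought to a permutation matrix by
multiplying by invertible upper triangular matrices on both sides. -/
theorem key : ∀ (n : ℕ) (A : Matrix (Fin n) (Fin n) F), IsUnit A →
    ∃ (U V : Matrix (Fin n) (Fin n) F) (σ : Equiv.Perm (Fin n)),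
      U.BlockTriangular id ∧ V.BlockTriangular id ∧ IsUnit U ∧ IsUnit V ∧
      U * A * V = P σ := by
  intro n
  induction n with
  | zero =>
    intro A _
    refine ⟨1, 1, 1, ?_, ?_, isUnit_one, isUnit_one, ?_⟩ <;>
      first
      | (intro x y _; exact x.elim0)
      | (ext x y; exact x.elim0)
  | succ n IH =>
    intro A hA
    classical
    have hdet : A.det ≠ 0 := by
      have := (Matrix.isUnit_iff_isUnit_det A).mp hA
      simpa [isUnit_iff_ne_zero] using this
    -- find the pivot row: the largest index with nonzero entry in column 0
    have hcol : ∃ x, A x 0 ≠ 0 := by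
      by_contra h
      push_neg at h
      exact hdet (Matrix.det_eq_zero_of_column_eq_zero 0 h)
    set s : Finset (Fin (n + 1)) := Finset.univ.filter (fun x => A x 0 ≠ 0) with hs
    have hsne : s.Nonempty := by
      obtain ⟨x, hx⟩ := hcol
      exact ⟨x, by simp [hs, hx]⟩
    set i : Fin (n + 1) := s.max' hsne with hidef
    have hi : A i 0 ≠ 0 := by
      have := s.max'_mem hsne
      simpa [hs] using this
    have hmax : ∀ x, i < x → A x 0 = 0 := by
      intro x hx
      by_contra hxne
      exact absurd (s.le_max' x (by simp [hs, hxne])) (not_le.mpr hx)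
    set q : F := A i 0 with hq
    -- row-clearing matrix E
    set E : Matrix (Fin (n + 1)) (Fin (n + 1)) F :=
      Matrix.of (fun x y =>
        if y = i then (if x = i then q⁻¹ else -(A x 0) * q⁻¹) else if x = y then 1 else 0)
      with hE
    have hE_tri : E.BlockTriangular id := by
      intro x y hxy
      have hxy' : (y : Fin (n + 1)) < x := hxy
      simp only [hE, Matrix.of_apply]
      rcases eq_or_ne y i with rfl | hyne
      · rw [if_pos rfl, if_neg (ne_of_gt hxy'), hmax x hxy']
        ring
      · rw [if_neg hyne, if_neg (ne_of_gt hxy')]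
    have hE_diag : ∀ x, E x x = if x = i then q⁻¹ else 1 := by
      intro x
      rcases eq_or_ne x i with rfl | hx
      · simp [hE]
      · simp [hE, hx]
    have hE_det : E.det ≠ 0 := by
      rw [Matrix.det_of_upperTriangular hE_tri]
      rw [Finset.prod_ne_zero_iff]
      intro x _
      rw [hE_diag]
      rcases eq_or_ne x i with rfl | hx
      · simp [inv_ne_zero hi]
      · simp [hx]
    have hE_unit : IsUnit E := (Matrix.isUnit_iff_isUnit_det E).mpr (isUnit_iff_ne_zero.mpr hE_det)
    set A₁ : Matrix (Fin (n + 1)) (Fin (n + 1)) F := E * A with hA₁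
    have hA₁0 : ∀ x, A₁ x 0 = if x = i then 1 else 0 := by
      intro x
      rw [hA₁, Matrix.mul_apply]
      rcases eq_or_ne x i with rfl | hx
      · rw [if_pos rfl, Finset.sum_eq_single i]
        · simp [hE, inv_mul_cancel₀ hi]
          exact inv_mul_cancel₀ hi
        · intro y _ hy
          simp [hE, hy, Ne.symm hy]
        · simp
      · rw [if_neg hx]
        have hsub : ∀ y ∈ Finset.univ, y ∉ ({i, x} : Finset (Fin (n+1))) → E x y * A y 0 = 0 := by
          intro y _ hy
          simp only [Finset.mem_insert, Finset.mem_singleton, not_or] at hy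
          simp [hE, hy.1, Ne.symm hy.2]
        rw [← Finset.sum_subset (Finset.subset_univ ({i, x} : Finset (Fin (n+1)))) hsub,
          Finset.sum_pair (Ne.symm hx)]
        simp only [hE, Matrix.of_apply, if_pos rfl, if_neg hx]
        field_simp
        rw [if_pos trivial, if_pos trivial, hq, mul_one, neg_mul,
          div_mul_cancel₀ _ (show A i 0 ≠ 0 from hi), neg_add_cancel]
    -- column-clearing matrix Fc
    set Fc : Matrix (Fin (n + 1)) (Fin (n + 1)) F :=
      Matrix.of (fun y j => if y = j then 1 else if y = 0 then -(A₁ i j) else 0) with hFc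
    have hFc_tri : Fc.BlockTriangular id := by
      intro y j hyj
      have h1 : y ≠ j := ne_of_gt hyj
      have h2 : y ≠ 0 := by
        intro h
        rw [h] at hyj
        exact Fin.not_lt_zero j hyj
      simp [hFc, h1, h2]
    have hFc_det : Fc.det ≠ 0 := by
      rw [Matrix.det_of_upperTriangular hFc_tri]
      simp [hFc]
    have hFc_unit : IsUnit Fc :=
      (Matrix.isUnit_iff_isUnit_det Fc).mpr (isUnit_iff_ne_zero.mpr hFc_det)
    set A₂ : Matrix (Fin (n + 1)) (Fin (n + 1)) F := A₁ * Fc with hA₂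
    have hA₂col : ∀ x, A₂ x 0 = if x = i then 1 else 0 := by
      intro x
      rw [hA₂, Matrix.mul_apply, Finset.sum_eq_single 0]
      · rw [← hA₁0 x]; simp [hFc]
      · intro y _ hy
        simp [hFc, hy, Ne.symm hy]
      · simp
    have hA₂row : ∀ j, j ≠ 0 → A₂ i j = 0 := by
      intro j hj
      rw [hA₂, Matrix.mul_apply]
      have hsub : ∀ y ∈ Finset.univ, y ∉ ({0, j} : Finset (Fin (n+1))) → A₁ i y * Fc y j = 0 := by
        intro y _ hy
        simp only [Finset.mem_insert, Finset.mem_singleton, not_or] at hy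
        simp [hFc, hy.1, hy.2]
      rw [← Finset.sum_subset (Finset.subset_univ _) hsub, Finset.sum_pair (Ne.symm hj)]
      have h0 : A₁ i 0 = 1 := by simpa using hA₁0 i
      simp [hFc, Ne.symm hj, hj, h0]
    have hA₂_unit : IsUnit A₂ := (hE_unit.mul hA).mul hFc_unit
    have hA₂_det : A₂.det ≠ 0 := by
      have := (Matrix.isUnit_iff_isUnit_det A₂).mp hA₂_unit
      simpa [isUnit_iff_ne_zero] using this
    -- the submatrix
    set B : Matrix (Fin n) (Fin n) F := A₂.submatrix i.succAbove Fin.succ with hB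
    have hB_det : B.det ≠ 0 := by
      have hexp := Matrix.det_succ_column_zero A₂
      rw [Finset.sum_eq_single i] at hexp
      · rw [hA₂col i, if_pos rfl] at hexp
        intro h
        rw [← hB] at hexp
        rw [h] at hexp
        simp at hexp
        exact hA₂_det hexp
      · intro x _ hx
        rw [hA₂col x, if_neg hx]
        ring
      · simp
    have hB_unit : IsUnit B :=
      (Matrix.isUnit_iff_isUnit_det B).mpr (isUnit_iff_ne_zero.mpr hB_det)
    obtain ⟨U, V, τ, hU_tri, hV_tri, hU_unit, hV_unit, hUBV⟩ := IH B hB_unit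
    -- assemble
    set Uf : Matrix (Fin (n + 1)) (Fin (n + 1)) F := ext i U * E with hUf
    set Vf : Matrix (Fin (n + 1)) (Fin (n + 1)) F := Fc * ext 0 V with hVf
    set σ : Equiv.Perm (Fin (n + 1)) :=
      (finSuccEquiv' (0 : Fin (n + 1))).trans
        ((Equiv.optionCongr τ).trans (finSuccEquiv' i).symm) with hσ
    have hσ0 : σ 0 = i := by
      rw [hσ]
      simp only [Equiv.trans_apply, finSuccEquiv'_at, Equiv.optionCongr_apply, Option.map_none]
      rw [Equiv.symm_apply_eq, finSuccEquiv'_at]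
    have hσs : ∀ b, σ ((0 : Fin (n + 1)).succAbove b) = i.succAbove (τ b) := by
      intro b
      rw [hσ]
      simp only [Equiv.trans_apply, finSuccEquiv'_succAbove, Equiv.optionCongr_apply,
        Option.map_some]
      rw [Equiv.symm_apply_eq, finSuccEquiv'_succAbove]
    -- key computation
    have h1 : ∀ c, (ext i U * A₂) i c = if c = 0 then 1 else 0 := by
      intro c
      rw [Matrix.mul_apply, Fin.sum_univ_succAbove _ i]
      simp only [ext_pp, ext_ps, one_mul, zero_mul, Finset.sum_const_zero, add_zero]
      rcases eq_or_ne c 0 with rfl | hc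
      · simpa using hA₂col i
      · rw [if_neg hc]
        exact hA₂row c hc
    have h2 : ∀ a c, (ext i U * A₂) (i.succAbove a) c
        = ∑ b, U a b * A₂ (i.succAbove b) c := by
      intro a c
      rw [Matrix.mul_apply, Fin.sum_univ_succAbove _ i]
      simp [ext_sp, ext_ss]
    have hfinal : Uf * A * Vf = P σ := by
      have : ext i U * A₂ * ext 0 V = P σ := by
        ext x y
        rw [Matrix.mul_apply, Fin.sum_univ_succAbove _ (0 : Fin (n + 1))]
        rcases eq_or_ne x i with rfl | hx
        · rw [h1 0, if_pos rfl, one_mul]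
          have hrest : ∑ c, (ext i U * A₂) i ((0 : Fin (n+1)).succAbove c)
              * ext 0 V ((0 : Fin (n+1)).succAbove c) y = 0 := by
            apply Finset.sum_eq_zero
            intro c _
            rw [h1 _, if_neg (Fin.succAbove_ne 0 c)]
            ring
          rw [hrest, add_zero]
          rcases eq_or_ne y 0 with rfl | hy
          · rw [ext_pp]
            simp [P, hσ0]
          · obtain ⟨y', rfl⟩ := Fin.exists_succAbove_eq hy
            rw [ext_ps]
            have : i ≠ σ ((0 : Fin (n+1)).succAbove y') := by
              rw [hσs]
              exact Fin.ne_succAbove i (τ y')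
            rw [Fin.zero_succAbove] at this
            simp [P, this]
        · obtain ⟨a, rfl⟩ := Fin.exists_succAbove_eq hx
          have hc0 : (ext i U * A₂) (i.succAbove a) 0 = 0 := by
            rw [h2]
            apply Finset.sum_eq_zero
            intro b _
            rw [hA₂col, if_neg (Fin.succAbove_ne i b)]
            ring
          rw [hc0, zero_mul, zero_add]
          rcases eq_or_ne y 0 with rfl | hy
          · have hrest : ∑ c, (ext i U * A₂) (i.succAbove a) ((0 : Fin (n+1)).succAbove c)
                * ext 0 V ((0 : Fin (n+1)).succAbove c) 0 = 0 := by
              apply Finset.sum_eq_zero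
              intro c _
              rw [ext_sp]
              ring
            rw [hrest]
            have : i.succAbove a ≠ σ 0 := by rw [hσ0]; exact Fin.succAbove_ne i a
            simp [P, this]
          · obtain ⟨y', rfl⟩ := Fin.exists_succAbove_eq hy
            have hPτ := congrFun (congrFun hUBV a) y'
            have hLHS : ∑ c, (ext i U * A₂) (i.succAbove a) ((0 : Fin (n+1)).succAbove c)
                * ext 0 V ((0 : Fin (n+1)).succAbove c) ((0 : Fin (n+1)).succAbove y')
                = (U * B * V) a y' := by
              rw [Matrix.mul_apply]
              refine Finset.sum_congr rfl fun c _ => ?_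
              rw [h2, ext_ss, Matrix.mul_apply, Finset.sum_mul, Finset.sum_mul]
              refine Finset.sum_congr rfl fun b _ => ?_
              simp [hB, Fin.zero_succAbove, mul_assoc]
            rw [hLHS, hUBV]
            have : i.succAbove a = σ ((0 : Fin (n+1)).succAbove y') ↔ a = τ y' := by
              rw [hσs]
              exact Fin.succAbove_right_injective.eq_iff
            simp only [P, Matrix.of_apply]
            exact (if_congr this rfl rfl).symm
      calc Uf * A * Vf = ext i U * A₂ * ext 0 V := by
            rw [hUf, hVf, hA₂, hA₁]; noncomm_ring
        _ = P σ := this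
    have hUf_tri : Uf.BlockTriangular id :=
      (ext_blockTriangular i U hU_tri).mul hE_tri
    have hVf_tri : Vf.BlockTriangular id :=
      hFc_tri.mul (ext_blockTriangular 0 V hV_tri)
    have hUf_unit : IsUnit Uf := by
      refine ((Matrix.isUnit_iff_isUnit_det _).mpr ?_).mul hE_unit
      rw [ext_det i U hU_tri]
      exact (Matrix.isUnit_iff_isUnit_det U).mp hU_unit
    have hVf_unit : IsUnit Vf := by
      refine hFc_unit.mul ((Matrix.isUnit_iff_isUnit_det _).mpr ?_)
      rw [ext_det 0 V hV_tri]
      exact (Matrix.isUnit_iff_isUnit_det V).mp hV_unit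
    exact ⟨Uf, Vf, σ, hUf_tri, hVf_tri, hUf_unit, hVf_unit, hfinal⟩

end BruhatAux

/-- Bruhat decomposition for GL(n, F): every invertible matrix over a field
factors as `T * P * T'` with `T, T'` invertible upper triangular and `P` a
permutation matrix. -/
theorem bruhat_decomposition {F : Type*} [Field F] {n : ℕ}
    (A : Matrix (Fin n) (Fin n) F) (hA : IsUnit A) :
    ∃ (T T' : Matrix (Fin n) (Fin n) F) (σ : Equiv.Perm (Fin n)),
      T.BlockTriangular id ∧ T'.BlockTriangular id ∧ IsUnit T ∧ IsUnit T' ∧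
      A = T * (Matrix.of fun i j => if i = σ j then (1 : F) else 0) * T' := by
  obtain ⟨U, V, σ, hU_tri, hV_tri, hU_unit, hV_unit, hUV⟩ := BruhatAux.key n A hA
  have hUdet : IsUnit U.det := (Matrix.isUnit_iff_isUnit_det U).mp hU_unit
  have hVdet : IsUnit V.det := (Matrix.isUnit_iff_isUnit_det V).mp hV_unit
  haveI : Invertible U := U.invertibleOfIsUnitDet hUdet
  haveI : Invertible V := V.invertibleOfIsUnitDet hVdet
  refine ⟨U⁻¹, V⁻¹, σ, Matrix.blockTriangular_inv_of_blockTriangular hU_tri,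
    Matrix.blockTriangular_inv_of_blockTriangular hV_tri, ?_, ?_, ?_⟩
  · exact ⟨⟨U⁻¹, U, Matrix.nonsing_inv_mul U hUdet, Matrix.mul_nonsing_inv U hUdet⟩, rfl⟩
  · exact ⟨⟨V⁻¹, V, Matrix.nonsing_inv_mul V hVdet, Matrix.mul_nonsing_inv V hVdet⟩, rfl⟩
  · have : (Matrix.of fun i j => if i = σ j then (1 : F) else 0) = BruhatAux.P σ := rfl
    rw [this, ← hUV]
    rw [Matrix.mul_assoc, Matrix.mul_assoc, Matrix.mul_nonsing_inv V hVdet, Matrix.mul_one,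
      ← Matrix.mul_assoc, Matrix.nonsing_inv_mul U hUdet, Matrix.one_mul]
end

section
/- Let F be a field and A an invertible n×n matrix over F. If T P T' = S Q S' with T, T', S, S' invertible upper triangular matrices and P, Q permutation matrices, then P = Q. (Uniqueness of the permutation in the Bruhat decomposition; equivalently, the double coset space T(n)\GL(n,F)/T(n) is in bijection with the symmetric group S_n.) -/
open Matrix

private lemma perm_matrix_eq {F : Type*} [Field F] {n : ℕ} (σ : Equiv.Perm (Fin n)) :
    (Matrix.of fun i j => if i = σ j then (1 : F) else 0)
      = (σ⁻¹.toPEquiv.toMatrix : Matrix (Fin n) (Fin n) F) := by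
  ext i j
  simp only [PEquiv.toMatrix, Equiv.toPEquiv_apply, Option.mem_def, Option.some.injEq,
    Matrix.of_apply]
  congr 1
  simp only [eq_iff_iff]
  constructor
  · rintro rfl; simp
  · rintro rfl; simp

private lemma perm_mul_inv_perm {F : Type*} [Field F] {n : ℕ} (τ : Equiv.Perm (Fin n)) :
    (τ.toPEquiv.toMatrix : Matrix (Fin n) (Fin n) F) * τ⁻¹.toPEquiv.toMatrix = 1 := by
  rw [← PEquiv.toMatrix_trans, ← Equiv.toPEquiv_trans]
  have : τ.trans τ⁻¹ = Equiv.refl (Fin n) := by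
    ext x; simp
  rw [this, Equiv.toPEquiv_refl, PEquiv.toMatrix_refl]

/-- Key lemma: if `P_{σ⁻¹} = B * P_{τ⁻¹} * C` with `B` invertible upper triangular and
`C` a unit upper triangular, then `τ i ≤ σ i` for all `i`. -/
private lemma key {F : Type*} [Field F] {n : ℕ} (B C : Matrix (Fin n) (Fin n) F)
    (σ τ : Equiv.Perm (Fin n))
    (hB : B.BlockTriangular id) (hBu : IsUnit B)
    (hC : C.BlockTriangular id) (hCu : IsUnit C)
    (heq : (σ⁻¹.toPEquiv.toMatrix : Matrix (Fin n) (Fin n) F)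
        = B * τ⁻¹.toPEquiv.toMatrix * C) (i : Fin n) : τ i ≤ σ i := by
  obtain ⟨hBi⟩ := (nonempty_invertible_iff_isUnit B).mpr hBu
  haveI := hBi
  have hBinv : (B⁻¹).BlockTriangular id := blockTriangular_inv_of_blockTriangular hB
  -- C = B⁻¹ P_{σ⁻¹} with permutation stripped: C = B⁻¹.submatrix τ σ
  have h1 : τ⁻¹.toPEquiv.toMatrix * C = B⁻¹ * σ⁻¹.toPEquiv.toMatrix := by
    rw [heq, Matrix.mul_assoc, Matrix.inv_mul_cancel_left_of_invertible]
  have h2 : C = τ.toPEquiv.toMatrix * (B⁻¹ * σ⁻¹.toPEquiv.toMatrix) := by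
    rw [← h1, ← Matrix.mul_assoc, perm_mul_inv_perm, Matrix.one_mul]
  have h3 : C = (B⁻¹).submatrix τ σ := by
    rw [h2, PEquiv.mul_toMatrix_toPEquiv, PEquiv.toMatrix_toPEquiv_mul]
    ext a b
    simp [Matrix.submatrix_apply, Equiv.Perm.inv_def]
  -- diagonal entries of C are nonzero
  have hdet : C.det ≠ 0 := by
    have := (Matrix.isUnit_iff_isUnit_det C).mp hCu
    exact this.ne_zero
  have hdiag : C i i ≠ 0 := by
    intro h0
    apply hdet
    rw [Matrix.det_of_upperTriangular hC]
    exact Finset.prod_eq_zero (Finset.mem_univ i) h0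
  have hentry : B⁻¹ (τ i) (σ i) ≠ 0 := by
    rw [h3] at hdiag
    simpa using hdiag
  by_contra hlt
  exact hentry (hBinv (by simpa using lt_of_not_ge hlt))

/-- Uniqueness of the permutation in the Bruhat decomposition:
if `T * P * T' = S * Q * S'` with `T, T', S, S'` invertible upper triangular
and `P, Q` permutation matrices, then `P = Q`. -/
theorem bruhat_permutation_unique {F : Type*} [Field F] {n : ℕ}
    (T T' S S' : Matrix (Fin n) (Fin n) F) (σ τ : Equiv.Perm (Fin n))
    (hT : T.BlockTriangular id) (hT' : T'.BlockTriangular id)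
    (hS : S.BlockTriangular id) (hS' : S'.BlockTriangular id)
    (hTu : IsUnit T) (hT'u : IsUnit T') (hSu : IsUnit S) (hS'u : IsUnit S')
    (h : T * (Matrix.of fun i j => if i = σ j then (1 : F) else 0) * T'
        = S * (Matrix.of fun i j => if i = τ j then (1 : F) else 0) * S') :
    (Matrix.of fun i j => if i = σ j then (1 : F) else 0)
      = (Matrix.of fun i j => if i = τ j then (1 : F) else 0) := by
  rw [perm_matrix_eq, perm_matrix_eq] at h ⊢
  obtain ⟨hTi⟩ := (nonempty_invertible_iff_isUnit T).mpr hTu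
  obtain ⟨hT'i⟩ := (nonempty_invertible_iff_isUnit T').mpr hT'u
  haveI := hTi; haveI := hT'i
  have hTinv : (T⁻¹).BlockTriangular id := blockTriangular_inv_of_blockTriangular hT
  have hT'inv : (T'⁻¹).BlockTriangular id := blockTriangular_inv_of_blockTriangular hT'
  set B := T⁻¹ * S with hBdef
  set C := S' * T'⁻¹ with hCdef
  have hB : B.BlockTriangular id := hTinv.mul hS
  have hC : C.BlockTriangular id := hS'.mul hT'inv
  have hBu : IsUnit B := (isUnit_of_invertible T⁻¹).mul hSu
  have hCu : IsUnit C := hS'u.mul (isUnit_of_invertible T'⁻¹)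
  have heq : (σ⁻¹.toPEquiv.toMatrix : Matrix (Fin n) (Fin n) F)
      = B * τ⁻¹.toPEquiv.toMatrix * C := by
    rw [hBdef, hCdef]
    calc (σ⁻¹.toPEquiv.toMatrix : Matrix (Fin n) (Fin n) F)
        = T⁻¹ * (T * σ⁻¹.toPEquiv.toMatrix * T') * T'⁻¹ := by
          rw [Matrix.mul_assoc T, Matrix.inv_mul_cancel_left_of_invertible,
            Matrix.mul_inv_cancel_right_of_invertible]
      _ = T⁻¹ * (S * τ⁻¹.toPEquiv.toMatrix * S') * T'⁻¹ := by rw [h]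
      _ = T⁻¹ * S * τ⁻¹.toPEquiv.toMatrix * (S' * T'⁻¹) := by
          simp only [Matrix.mul_assoc]
  have hle1 : ∀ i, τ i ≤ σ i := key B C σ τ hB hBu hC hCu heq
  -- reverse direction
  obtain ⟨hBi⟩ := (nonempty_invertible_iff_isUnit B).mpr hBu
  obtain ⟨hCi⟩ := (nonempty_invertible_iff_isUnit C).mpr hCu
  haveI := hBi; haveI := hCi
  have heq2 : (τ⁻¹.toPEquiv.toMatrix : Matrix (Fin n) (Fin n) F)
      = B⁻¹ * σ⁻¹.toPEquiv.toMatrix * C⁻¹ := by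
    rw [heq, Matrix.mul_assoc B, Matrix.inv_mul_cancel_left_of_invertible,
      Matrix.mul_inv_cancel_right_of_invertible]
  have hle2 : ∀ i, σ i ≤ τ i :=
    key B⁻¹ C⁻¹ τ σ (blockTriangular_inv_of_blockTriangular hB)
      (isUnit_of_invertible _) (blockTriangular_inv_of_blockTriangular hC)
      (isUnit_of_invertible _) heq2
  have hστ : σ = τ := Equiv.ext fun i => le_antisymm (hle2 i) (hle1 i)
  rw [hστ]
end

section
/- Let F be a field and let D : F^m → F^n be a linear map given by a matrix with respect to the standard bases. Then there exist invertible upper triangular matrices T ∈ GL(m,F) and S ∈ GL(n,F) such that the matrix S⁻¹ D T is 'simple': every column is either zero or a standard basis vector, and the nonzero columns are pairwise distinct standard basis vectors. -/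
/-- A matrix is *simple* if every column is zero or a standard basis vector,
and distinct nonzero columns are distinct standard basis vectors. -/
def Matrix.IsSimpleCol {F : Type*} [Field F] {n m : ℕ}
    (M : Matrix (Fin n) (Fin m) F) : Prop :=
  (∀ j, (fun i => M i j) = 0 ∨ ∃ i, (fun i' => M i' j) = Pi.single i (1 : F)) ∧
  ∀ j j', (fun i => M i j) ≠ 0 → (fun i => M i j) = (fun i => M i j') → j = j'

open Matrix Finset

section helpers
variable {F : Type*} [Field F] {n m : ℕ}

lemma isUnit_of_triangular {M : Matrix (Fin n) (Fin n) F}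
    (h : M.BlockTriangular id) (hd : ∀ i, M i i ≠ 0) : IsUnit M := by
  rw [Matrix.isUnit_iff_isUnit_det, Matrix.det_of_upperTriangular h, isUnit_iff_ne_zero]
  exact Finset.prod_ne_zero_iff.mpr fun i _ => hd i

lemma inv_triangular {M : Matrix (Fin n) (Fin n) F}
    (h : M.BlockTriangular id) (hu : IsUnit M) : M⁻¹.BlockTriangular id := by
  have : Invertible M := hu.invertible
  exact Matrix.blockTriangular_inv_of_blockTriangular h

lemma U_facts (sc : F) (hsc : sc ≠ 0) (c : Fin m → F)
    (U : Matrix (Fin (m+1)) (Fin (m+1)) F)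
    (hU : ∀ k l, U k l = if l = Fin.last m then
        (if h : (k : ℕ) < m then -(sc * c ⟨k, h⟩) else sc) else (if k = l then 1 else 0)) :
    U.BlockTriangular id ∧ IsUnit U ∧
    (∀ (M : Matrix (Fin n) (Fin (m+1)) F) i (j : Fin m),
        (M * U) i j.castSucc = M i j.castSucc) ∧
    (∀ (M : Matrix (Fin n) (Fin (m+1)) F) i,
        (M * U) i (Fin.last m) = sc * M i (Fin.last m) + ∑ j, -(sc * c j) * M i j.castSucc) := by
  have htri : U.BlockTriangular id := by
    intro i j hij
    simp only [id] at hij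
    have hjl : j ≠ Fin.last m := by
      intro h; subst h; exact absurd hij (Fin.le_last i).not_gt
    rw [hU, if_neg hjl, if_neg hij.ne']
  refine ⟨htri, isUnit_of_triangular htri ?_, ?_, ?_⟩
  · intro k
    rw [hU]
    by_cases hk : k = Fin.last m
    · rw [if_pos hk, dif_neg (by simp [hk])]
      exact hsc
    · rw [if_neg hk, if_pos rfl]
      exact one_ne_zero
  · intro M i j
    rw [Matrix.mul_apply]
    have : ∀ k, M i k * U k j.castSucc = if k = j.castSucc then M i k else 0 := by
      intro k
      rw [hU, if_neg (Fin.castSucc_lt_last j).ne]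
      split <;> simp
    rw [Finset.sum_congr rfl fun k _ => this k, Finset.sum_ite_eq' univ j.castSucc]
    simp
  · intro M i
    rw [Matrix.mul_apply, Fin.sum_univ_castSucc]
    have h1 : ∀ j : Fin m, U j.castSucc (Fin.last m) = -(sc * c j) := by
      intro j
      rw [hU, if_pos rfl, dif_pos (show ((j.castSucc : Fin (m+1)) : ℕ) < m from j.isLt)]
      congr 1
    have h2 : U (Fin.last m) (Fin.last m) = sc := by
      rw [hU, if_pos rfl, dif_neg (by simp)]
    rw [h2, Finset.sum_congr rfl fun j _ => by rw [h1 j], add_comm, mul_comm]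
    congr 1
    exact Finset.sum_congr rfl fun j _ => mul_comm _ _

lemma R_facts (i₀ : Fin n) (r : Fin n → F) (hr : ∀ a, i₀ ≤ a → r a = 0)
    (R : Matrix (Fin n) (Fin n) F)
    (hR : ∀ a b, R a b = (if a = b then 1 else 0) + (if b = i₀ then r a else 0)) :
    R.BlockTriangular id ∧ IsUnit R ∧
    (∀ (x : Fin n → F) a, ∑ b, R a b * x b = x a + r a * x i₀) := by
  have htri : R.BlockTriangular id := by
    intro i j hij
    simp only [id] at hij
    rw [hR, if_neg hij.ne']
    by_cases hj : j = i₀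
    · rw [if_pos hj, hr i (hj ▸ hij.le)]; ring
    · rw [if_neg hj]; ring
  have hdiag : ∀ a, R a a = 1 := by
    intro a
    rw [hR, if_pos rfl]
    by_cases ha : a = i₀
    · rw [if_pos ha, hr a (ha ▸ le_refl _)]; ring
    · rw [if_neg ha]; ring
  refine ⟨htri, isUnit_of_triangular htri (fun a => by rw [hdiag]; exact one_ne_zero), ?_⟩
  intro x a
  have : ∀ b, R a b * x b = (if b = a then x b else 0) + (if b = i₀ then r a * x b else 0) := by
    intro b
    rw [hR, add_mul]
    congr 1
    · split <;> rename_i h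
      · rw [if_pos h.symm]; ring
      · rw [if_neg (fun hh => h hh.symm)]; ring
    · split <;> simp
  rw [Finset.sum_congr rfl fun b _ => this b, Finset.sum_add_distrib,
    Finset.sum_ite_eq' univ a, Finset.sum_ite_eq' univ i₀]
  simp

/-- The key reduction step: given that the first `m` columns of `M` agree with a simple
matrix `N`, we can fix up the last column. -/
lemma step (M : Matrix (Fin n) (Fin (m+1)) F) (N : Matrix (Fin n) (Fin m) F)
    (colA : ∀ i j, M i (Fin.castSucc j) = N i j) (hsimp : N.IsSimpleCol) :
    ∃ (U : Matrix (Fin (m+1)) (Fin (m+1)) F) (R : Matrix (Fin n) (Fin n) F),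
      U.BlockTriangular id ∧ IsUnit U ∧ R.BlockTriangular id ∧ IsUnit R ∧
      (R * (M * U)).IsSimpleCol := by
  classical
  obtain ⟨c, hc⟩ : ∃ c : Fin m → F, ∀ j, c j = ∑ i, M i (Fin.last m) * N i j :=
    ⟨_, fun _ => rfl⟩
  obtain ⟨w, hwd⟩ : ∃ w : Fin n → F, ∀ i, w i = M i (Fin.last m) - ∑ j, c j * N i j :=
    ⟨_, fun _ => rfl⟩
  -- at any pivot row, w vanishes
  have hwpiv : ∀ (q : Fin n) (j₀ : Fin m), (fun i' => N i' j₀) = Pi.single q 1 → w q = 0 := by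
    intro q j₀ hcol
    have hNq : ∀ i', N i' j₀ = (Pi.single q (1:F) : Fin n → F) i' := fun i' => by rw [← hcol]
    have hsum : ∑ j, c j * N q j = c j₀ := by
      rw [Finset.sum_eq_single j₀]
      · rw [hNq q, Pi.single_eq_same, mul_one]
      · intro j _ hne
        rcases hsimp.1 j with hz | ⟨p, hp⟩
        · rw [show N q j = 0 from congrFun hz q, mul_zero]
        · have hqp : q ≠ p := by
            intro h; subst h
            refine hne (hsimp.2 j j₀ ?_ ?_)
            · rw [hp]
              intro h0
              have h2 := congrFun h0 q
              simp only [Pi.single_eq_same, Pi.zero_apply] at h2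
              exact one_ne_zero h2
            · rw [hp, hcol]
          rw [congrFun hp q, Pi.single_eq_of_ne hqp, mul_zero]
      · intro h; exact absurd (Finset.mem_univ j₀) h
    have hc0 : c j₀ = M q (Fin.last m) := by
      rw [hc, Finset.sum_eq_single q]
      · rw [hNq q, Pi.single_eq_same, mul_one]
      · intro i _ hne; rw [hNq i, Pi.single_eq_of_ne hne, mul_zero]
      · intro h; exact absurd (Finset.mem_univ q) h
    rw [hwd, hsum, hc0, sub_self]
  -- last column of M * U
  have key : ∀ (sc : F) (U : Matrix (Fin (m+1)) (Fin (m+1)) F),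
      (∀ i, (M*U) i (Fin.last m)
        = sc * M i (Fin.last m) + ∑ j, -(sc * c j) * M i j.castSucc) →
      ∀ a, (M * U) a (Fin.last m) = sc * w a := by
    intro sc U hUl a
    rw [hUl a, hwd a, mul_sub, sub_eq_add_neg, Finset.mul_sum, ← Finset.sum_neg_distrib]
    congr 1
    refine Finset.sum_congr rfl fun j _ => ?_
    rw [colA a j]
    ring
  by_cases hwz : ∀ i, w i = 0
  · -- last column can be cleared to zero
    obtain ⟨U, hUe⟩ : ∃ U : Matrix (Fin (m+1)) (Fin (m+1)) F, ∀ k l,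
        U k l = if l = Fin.last m then
          (if h : (k : ℕ) < m then -((1:F) * c ⟨k, h⟩) else 1) else (if k = l then 1 else 0) :=
      ⟨_, fun _ _ => rfl⟩
    obtain ⟨htU, huU, hUc, hUl⟩ := U_facts (1:F) one_ne_zero c U hUe
    have hlast : ∀ a, (M * U) a (Fin.last m) = 1 * w a := key 1 U (hUl M)
    refine ⟨U, 1, htU, huU, Matrix.blockTriangular_one, isUnit_one, ?_⟩
    rw [Matrix.one_mul]
    have hlast0 : (fun a => (M * U) a (Fin.last m)) = 0 := by
      funext a; simp only [Pi.zero_apply]; rw [hlast a, one_mul, hwz a]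
    have hcol : ∀ j : Fin m, (fun a => (M * U) a j.castSucc) = fun i => N i j :=
      fun j => funext fun a => by rw [hUc M a j, colA a j]
    constructor
    · intro l
      rcases Fin.eq_castSucc_or_eq_last l with ⟨j, rfl⟩ | rfl
      · rcases hsimp.1 j with hz | ⟨q, hq⟩
        · exact Or.inl ((hcol j).trans hz)
        · exact Or.inr ⟨q, (hcol j).trans hq⟩
      · exact Or.inl hlast0
    · intro l l' hne heq
      rcases Fin.eq_castSucc_or_eq_last l with ⟨j, rfl⟩ | rfl
      · rcases Fin.eq_castSucc_or_eq_last l' with ⟨j', rfl⟩ | rfl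
        · have h1 : (fun i => N i j) ≠ 0 := by rw [← hcol j]; exact hne
          have h2 : (fun i => N i j) = fun i => N i j' := by
            rw [← hcol j, ← hcol j']; exact heq
          rw [hsimp.2 j j' h1 h2]
        · exact absurd (heq.trans hlast0) hne
      · exact absurd hlast0 hne
  · -- there is a nonzero entry of w; pivot at the lowest one
    push_neg at hwz
    obtain ⟨i1, hi1⟩ := hwz
    have hsne : (Finset.univ.filter fun i => w i ≠ 0).Nonempty :=
      ⟨i1, Finset.mem_filter.mpr ⟨Finset.mem_univ _, hi1⟩⟩
    set i₀ := (Finset.univ.filter fun i => w i ≠ 0).max' hsne with hi₀d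
    have hwi₀ : w i₀ ≠ 0 := (Finset.mem_filter.mp (Finset.max'_mem _ hsne)).2
    have habove : ∀ a, i₀ < a → w a = 0 := by
      intro a ha
      by_contra hwa
      exact absurd (Finset.le_max' _ a (Finset.mem_filter.mpr ⟨Finset.mem_univ _, hwa⟩))
        ha.not_ge
    set sc := (w i₀)⁻¹ with hscd
    have hsc : sc ≠ 0 := inv_ne_zero hwi₀
    obtain ⟨U, hUe⟩ : ∃ U : Matrix (Fin (m+1)) (Fin (m+1)) F, ∀ k l,
        U k l = if l = Fin.last m then
          (if h : (k : ℕ) < m then -(sc * c ⟨k, h⟩) else sc) else (if k = l then 1 else 0) :=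
      ⟨_, fun _ _ => rfl⟩
    obtain ⟨htU, huU, hUc, hUl⟩ := U_facts sc hsc c U hUe
    have hlast : ∀ a, (M * U) a (Fin.last m) = sc * w a := key sc U (hUl M)
    obtain ⟨r, hrd⟩ : ∃ r : Fin n → F, ∀ a,
        r a = if i₀ ≤ a then 0 else -(sc * w a) := ⟨_, fun _ => rfl⟩
    have hr : ∀ a, i₀ ≤ a → r a = 0 := fun a ha => by rw [hrd a, if_pos ha]
    obtain ⟨R, hRe⟩ : ∃ R : Matrix (Fin n) (Fin n) F, ∀ a b,
        R a b = (if a = b then 1 else 0) + (if b = i₀ then r a else 0) := ⟨_, fun _ _ => rfl⟩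
    obtain ⟨htR, huR, hact⟩ := R_facts i₀ r hr R hRe
    have hX : ∀ a l, (R * (M * U)) a l = (M * U) a l + r a * (M * U) i₀ l := by
      intro a l
      rw [Matrix.mul_apply]
      exact hact (fun b => (M * U) b l) a
    have hi₀notpiv : ∀ j₀, (fun i' => N i' j₀) ≠ Pi.single i₀ 1 :=
      fun j₀ h => hwi₀ (hwpiv i₀ j₀ h)
    have hXc : ∀ j : Fin m, (fun a => (R * (M * U)) a j.castSucc) = fun i => N i j := by
      intro j; funext a
      rw [hX a _, hUc M a j, colA a j, hUc M i₀ j, colA i₀ j]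
      rcases hsimp.1 j with hz | ⟨q, hq⟩
      · rw [show N i₀ j = 0 from congrFun hz i₀]; ring
      · have hqi : q ≠ i₀ := fun h => hi₀notpiv j (h ▸ hq)
        rw [show N i₀ j = 0 from by
          rw [congrFun hq i₀]; exact Pi.single_eq_of_ne (Ne.symm hqi) 1]
        ring
    have h1 : sc * w i₀ = 1 := inv_mul_cancel₀ hwi₀
    have hXl : (fun a => (R * (M * U)) a (Fin.last m)) = Pi.single i₀ (1:F) := by
      funext a
      rw [hX, hlast a, hlast i₀]
      rcases lt_trichotomy a i₀ with h | h | h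
      · rw [hrd a, if_neg (not_le.mpr h), Pi.single_eq_of_ne h.ne 1, h1]; ring
      · rw [h, hrd i₀, if_pos le_rfl, Pi.single_eq_same, h1]; ring
      · rw [habove a h, hrd a, if_pos h.le, Pi.single_eq_of_ne h.ne' 1]; ring
    refine ⟨U, R, htU, huU, htR, huR, ?_, ?_⟩
    · intro l
      rcases Fin.eq_castSucc_or_eq_last l with ⟨j, rfl⟩ | rfl
      · rcases hsimp.1 j with hz | ⟨q, hq⟩
        · exact Or.inl ((hXc j).trans hz)
        · exact Or.inr ⟨q, (hXc j).trans hq⟩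
      · exact Or.inr ⟨i₀, hXl⟩
    · intro l l' hne heq
      rcases Fin.eq_castSucc_or_eq_last l with ⟨j, rfl⟩ | rfl
      · rcases Fin.eq_castSucc_or_eq_last l' with ⟨j', rfl⟩ | rfl
        · have ha : (fun i => N i j) ≠ 0 := by rw [← hXc j]; exact hne
          have hb : (fun i => N i j) = fun i => N i j' := by
            rw [← hXc j, ← hXc j']; exact heq
          rw [hsimp.2 j j' ha hb]
        · exact absurd ((hXc j).symm.trans (heq.trans hXl)) (hi₀notpiv j)
      · rcases Fin.eq_castSucc_or_eq_last l' with ⟨j', rfl⟩ | rfl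
        · exact absurd ((hXc j').symm.trans (heq.symm.trans hXl)) (hi₀notpiv j')
        · rfl

end helpers

/-- Existence of the simple normal form under triangular equivalence. -/
theorem exists_simple_normal_form {F : Type*} [Field F] {n m : ℕ}
    (D : Matrix (Fin n) (Fin m) F) :
    ∃ (T : Matrix (Fin m) (Fin m) F) (S : Matrix (Fin n) (Fin n) F),
      T.BlockTriangular id ∧ S.BlockTriangular id ∧ IsUnit T ∧ IsUnit S ∧
      (S⁻¹ * D * T).IsSimpleCol := by
  induction m with
  | zero =>
    exact ⟨1, 1, Matrix.blockTriangular_one, Matrix.blockTriangular_one, isUnit_one,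
      isUnit_one, fun j => j.elim0, fun j => j.elim0⟩
  | succ m ih =>
    obtain ⟨T', S', hT't, hS't, hT'u, hS'u, hsimp⟩ :=
      ih (Matrix.of fun i j => D i (Fin.castSucc j))
    set D' : Matrix (Fin n) (Fin m) F := Matrix.of fun i j => D i (Fin.castSucc j) with hD'
    -- diagonal entries of T' are nonzero
    have hT'det : T'.det ≠ 0 := by
      intro h
      rw [Matrix.isUnit_iff_isUnit_det, h] at hT'u
      simpa using hT'u
    have hT'diag : ∀ k, T' k k ≠ 0 := by
      intro k hk
      rw [Matrix.det_of_upperTriangular hT't] at hT'det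
      exact hT'det (Finset.prod_eq_zero (Finset.mem_univ k) hk)
    -- extend T' by a 1 in the corner
    obtain ⟨T₀, hT₀e⟩ : ∃ T₀ : Matrix (Fin (m+1)) (Fin (m+1)) F, ∀ i j,
        T₀ i j = if hi : (i : ℕ) < m then
            (if hj : (j : ℕ) < m then T' ⟨i, hi⟩ ⟨j, hj⟩ else 0)
          else (if (j : ℕ) < m then 0 else 1) := ⟨Matrix.of _, fun _ _ => rfl⟩
    have hT₀t : T₀.BlockTriangular id := by
      intro i j hij
      simp only [id] at hij
      rw [hT₀e]
      by_cases hi : (i : ℕ) < m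
      · rw [dif_pos hi, dif_pos (lt_trans (Fin.lt_def.mp hij) hi)]
        exact hT't (Fin.mk_lt_mk.mpr (Fin.lt_def.mp hij))
      · rw [dif_neg hi, if_pos ?_]
        have him : (i : ℕ) = m := le_antisymm (Nat.lt_succ_iff.mp i.isLt) (not_lt.mp hi)
        exact (Fin.lt_def.mp hij).trans_le him.le
    have hT₀diag : ∀ k, T₀ k k ≠ 0 := by
      intro k
      rw [hT₀e]
      by_cases hk : (k : ℕ) < m
      · rw [dif_pos hk, dif_pos hk]; exact hT'diag _
      · rw [dif_neg hk, if_neg hk]; exact one_ne_zero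
    have hT₀u : IsUnit T₀ := isUnit_of_triangular hT₀t hT₀diag
    -- the first m columns of M agree with N
    have colA : ∀ i (j : Fin m),
        (S'⁻¹ * D * T₀) i (Fin.castSucc j) = (S'⁻¹ * D' * T') i j := by
      intro i j
      rw [Matrix.mul_apply, Matrix.mul_apply, Fin.sum_univ_castSucc]
      have hlast : T₀ (Fin.last m) j.castSucc = 0 := by
        rw [hT₀e, dif_neg (by simp),
          if_pos (show ((j.castSucc : Fin (m+1)) : ℕ) < m from j.isLt)]
      rw [hlast, mul_zero, add_zero]
      refine Finset.sum_congr rfl fun k _ => ?_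
      have h1 : T₀ k.castSucc j.castSucc = T' k j := by
        rw [hT₀e, dif_pos (show ((k.castSucc : Fin (m+1)) : ℕ) < m from k.isLt),
          dif_pos (show ((j.castSucc : Fin (m+1)) : ℕ) < m from j.isLt)]
        exact congrArg₂ T' (Fin.ext rfl) (Fin.ext rfl)
      rw [h1]
      rfl
    obtain ⟨U, R, htU, huU, htR, huR, hXsimp⟩ :=
      step (S'⁻¹ * D * T₀) (S'⁻¹ * D' * T') colA hsimp
    have hRdet : IsUnit R.det := (Matrix.isUnit_iff_isUnit_det R).mp huR
    refine ⟨T₀ * U, S' * R⁻¹, hT₀t.mul htU, hS't.mul (inv_triangular htR huR),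
      hT₀u.mul huU, hS'u.mul (Matrix.isUnit_nonsing_inv_iff.mpr huR), ?_⟩
    have hfin : (S' * R⁻¹)⁻¹ * D * (T₀ * U) = R * (S'⁻¹ * D * T₀ * U) := by
      rw [Matrix.mul_inv_rev, Matrix.nonsing_inv_nonsing_inv R hRdet]
      simp only [Matrix.mul_assoc]
    rw [hfin]
    exact hXsimp
end

section
/- Let F be a field and let M, M' be two simple n×m matrices over F (every column zero or a standard basis vector, nonzero columns pairwise distinct). If there exist invertible upper triangular matrices T ∈ GL(m,F) and S ∈ GL(n,F) with M' = S⁻¹ M T, then M = M'. (Uniqueness of the simple normal form under triangular equivalence.) -/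
lemma single_ne_zero' {F : Type*} [Field F] {n : ℕ} (p : Fin n) :
    (Pi.single p (1 : F) : Fin n → F) ≠ 0 := by
  intro h
  have := congrFun h p
  simp at this

/-- Key lemma: if `S * M' = M * T` with `M` simple, `T` upper triangular and
`S` upper triangular invertible, then any pivot of `M'` in column `j` appears
as a pivot of `M` in some column `k ≤ j`. -/
lemma key_pivot {F : Type*} [Field F] {n m : ℕ}
    (M M' : Matrix (Fin n) (Fin m) F) (hM : M.IsSimpleCol)
    (T : Matrix (Fin m) (Fin m) F) (S : Matrix (Fin n) (Fin n) F)
    (hT : T.BlockTriangular id) (hS : S.BlockTriangular id) (hSu : IsUnit S)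
    (h : S * M' = M * T) (j : Fin m) (p : Fin n)
    (hp : (fun i => M' i j) = Pi.single p (1 : F)) :
    ∃ k, k ≤ j ∧ (fun i => M i k) = Pi.single p (1 : F) := by
  have hdet : S.det ≠ 0 := by
    have := (Matrix.isUnit_iff_isUnit_det S).mp hSu
    exact this.ne_zero
  have hSpp : S p p ≠ 0 := by
    intro h0
    apply hdet
    rw [Matrix.det_of_upperTriangular hS]
    exact Finset.prod_eq_zero (Finset.mem_univ p) h0
  have hentry : (S * M') p j = (M * T) p j := by rw [h]
  have hL : (S * M') p j = S p p := by
    simp only [Matrix.mul_apply]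
    rw [Finset.sum_eq_single p]
    · rw [show M' p j = (Pi.single p (1 : F) : Fin n → F) p from congrFun hp p]
      simp
    · intro i _ hi
      rw [show M' i j = (Pi.single p (1 : F) : Fin n → F) i from congrFun hp i]
      simp [Pi.single_apply, hi]
    · intro hmem; exact absurd (Finset.mem_univ p) hmem
  have hR : ∃ k, M p k * T k j ≠ 0 := by
    by_contra hc
    push_neg at hc
    have : (M * T) p j = 0 := by
      simp only [Matrix.mul_apply]
      exact Finset.sum_eq_zero fun k _ => hc k
    rw [← hentry, hL] at this
    exact hSpp this
  obtain ⟨k, hk⟩ := hR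
  have hMpk : M p k ≠ 0 := fun h0 => hk (by rw [h0, zero_mul])
  have hTkj : T k j ≠ 0 := fun h0 => hk (by rw [h0, mul_zero])
  have hkj : k ≤ j := by
    by_contra hlt
    push_neg at hlt
    exact hTkj (hT hlt)
  refine ⟨k, hkj, ?_⟩
  rcases hM.1 k with h0 | ⟨q, hq⟩
  · exact absurd (congrFun h0 p) hMpk
  · have hq' : M p k = (Pi.single q (1 : F) : Fin n → F) p := congrFun hq p
    have : q = p := by
      by_contra hne
      rw [Pi.single_apply, if_neg (Ne.symm hne)] at hq'
      exact hMpk hq'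
    rwa [this] at hq

/-- Uniqueness of the simple normal form under triangular equivalence. -/
theorem simple_normal_form_unique {F : Type*} [Field F] {n m : ℕ}
    (M M' : Matrix (Fin n) (Fin m) F)
    (hM : M.IsSimpleCol) (hM' : M'.IsSimpleCol)
    (T : Matrix (Fin m) (Fin m) F) (S : Matrix (Fin n) (Fin n) F)
    (hT : T.BlockTriangular id) (hS : S.BlockTriangular id)
    (hTu : IsUnit T) (hSu : IsUnit S)
    (h : M' = S⁻¹ * M * T) :
    M = M' := by
  haveI := hTu.invertible
  haveI := hSu.invertible
  have hTdet : IsUnit T.det := (Matrix.isUnit_iff_isUnit_det T).mp hTu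
  have hSdet : IsUnit S.det := (Matrix.isUnit_iff_isUnit_det S).mp hSu
  -- equation 1 : S * M' = M * T
  have h1 : S * M' = M * T := by
    rw [h, ← Matrix.mul_assoc, ← Matrix.mul_assoc, Matrix.mul_nonsing_inv S hSdet,
      Matrix.one_mul]
  -- equation 2 : S⁻¹ * M = M' * T⁻¹
  have h2 : S⁻¹ * M = M' * T⁻¹ := by
    rw [h, Matrix.mul_assoc (S⁻¹ * M) T T⁻¹, Matrix.mul_nonsing_inv T hTdet,
      Matrix.mul_one]
  have hTinv : (T⁻¹).BlockTriangular id :=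
    Matrix.blockTriangular_inv_of_blockTriangular hT
  have hSinv : (S⁻¹).BlockTriangular id :=
    Matrix.blockTriangular_inv_of_blockTriangular hS
  have hSinvU : IsUnit S⁻¹ := Matrix.isUnit_nonsing_inv_iff.mpr hSu
  -- pivot transfer in both directions
  have key1 : ∀ j p, (fun i => M' i j) = Pi.single p (1 : F) →
      ∃ k, k ≤ j ∧ (fun i => M i k) = Pi.single p (1 : F) :=
    fun j p hp => key_pivot M M' hM T S hT hS hSu h1 j p hp
  have key2 : ∀ j p, (fun i => M i j) = Pi.single p (1 : F) →
      ∃ k, k ≤ j ∧ (fun i => M' i k) = Pi.single p (1 : F) :=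
    fun j p hp => key_pivot M' M hM' T⁻¹ S⁻¹ hTinv hSinv hSinvU h2 j p hp
  -- pivots coincide columnwise
  have piv : ∀ j p, (fun i => M i j) = Pi.single p (1 : F) →
      (fun i => M' i j) = Pi.single p (1 : F) := by
    intro j p hp
    obtain ⟨k, hkj, hk⟩ := key2 j p hp
    obtain ⟨k', hk'k, hk'⟩ := key1 k p hk
    have : k' = j := hM.2 k' j (hk' ▸ single_ne_zero' p) (hk'.trans hp.symm)
    have hjk : j ≤ k := this ▸ hk'k
    have : k = j := le_antisymm hkj hjk
    rwa [this] at hk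
  have piv' : ∀ j p, (fun i => M' i j) = Pi.single p (1 : F) →
      (fun i => M i j) = Pi.single p (1 : F) := by
    intro j p hp
    obtain ⟨k, hkj, hk⟩ := key1 j p hp
    obtain ⟨k', hk'k, hk'⟩ := key2 k p hk
    have : k' = j := hM'.2 k' j (hk' ▸ single_ne_zero' p) (hk'.trans hp.symm)
    have hjk : j ≤ k := this ▸ hk'k
    have : k = j := le_antisymm hkj hjk
    rwa [this] at hk
  -- conclude columnwise equality
  ext i j
  have : (fun i => M i j) = (fun i => M' i j) := by
    rcases hM.1 j with h0 | ⟨p, hp⟩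
    · rcases hM'.1 j with h0' | ⟨p, hp⟩
      · rw [h0, h0']
      · exact absurd ((piv' j p hp) ▸ h0) (fun hh => single_ne_zero' p ((piv' j p hp).symm.trans h0))
    · rw [hp, piv j p hp]
  exact congrFun this i
end

section
/- Let F be a field and A ∈ GL(n,F). There exists a unique permutation σ ∈ S_n such that for all i, j: rank of the submatrix of A on rows ≥ i and columns ≤ j equals #{j' ≤ j : σ(j') ≥ i}. -/
open Module Submodule Matrix

/-- `swRank M i j` is the rank of the "southwest" submatrix of `M` on
rows `≥ i` and columns `≤ j`. -/
noncomputable def swRank {F : Type*} [Field F] {n : ℕ}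
    (M : Matrix (Fin n) (Fin n) F) (i : Fin n) (j : Fin n) : ℕ :=
  (M.submatrix (fun a : {a : Fin n // i ≤ a} => (a : Fin n))
    (fun b : {b : Fin n // b ≤ j} => (b : Fin n))).rank

namespace BruhatAux

attribute [local instance] Classical.propDecidable

variable {F : Type*} [Field F] {n : ℕ}

/-- Column `j'` of `A`, with entries in rows `< i` replaced by `0`. -/
def tcol (A : Matrix (Fin n) (Fin n) F) (i : Fin n) (j' : Fin n) : Fin n → F :=
  fun a => if i ≤ a then A a j' else 0

/-- Span of the first `m` truncated columns. -/
noncomputable def W (A : Matrix (Fin n) (Fin n) F) (i : Fin n) (m : ℕ) :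
    Submodule F (Fin n → F) :=
  Submodule.span F (tcol A i '' {j' : Fin n | j'.val < m})

noncomputable def d (A : Matrix (Fin n) (Fin n) F) (i : Fin n) (m : ℕ) : ℕ :=
  finrank F (W A i m)

/-- Extension by zero from functions on `{a // i ≤ a}` to functions on `Fin n`. -/
def ext0 (i : Fin n) : ({a : Fin n // i ≤ a} → F) →ₗ[F] (Fin n → F) where
  toFun g a := if h : i ≤ a then g ⟨a, h⟩ else 0
  map_add' g g' := by funext a; by_cases h : i ≤ a <;> simp [h]
  map_smul' c g := by funext a; by_cases h : i ≤ a <;> simp [h]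

lemma ext0_injective (i : Fin n) : Function.Injective (ext0 (F := F) i) := by
  intro g g' hgg
  funext x
  have := congrFun hgg x.val
  simpa [ext0, dif_pos x.prop] using this

lemma swRank_eq (A : Matrix (Fin n) (Fin n) F) (i j : Fin n) :
    swRank A i j = d A i (j.val + 1) := by
  have hset : (⇑(ext0 (F := F) i) ''
      Set.range (Matrix.transpose (A.submatrix (fun a : {a : Fin n // i ≤ a} => (a : Fin n))
        (fun b : {b : Fin n // b ≤ j} => (b : Fin n))))) =
      tcol A i '' {j' : Fin n | j'.val < j.val + 1} := by
    ext f
    constructor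
    · rintro ⟨g, ⟨b, rfl⟩, rfl⟩
      refine ⟨b.val, Nat.lt_succ_of_le (Fin.le_def.mp b.prop), ?_⟩
      funext a
      by_cases ha : i ≤ a <;>
        simp [ext0, tcol, ha, Matrix.submatrix_apply, Matrix.transpose_apply]
    · rintro ⟨j', hj', rfl⟩
      refine ⟨_, ⟨⟨j', Fin.le_def.mpr (Nat.lt_succ_iff.mp hj')⟩, rfl⟩, ?_⟩
      funext a
      by_cases ha : i ≤ a <;>
        simp [ext0, tcol, ha, Matrix.submatrix_apply, Matrix.transpose_apply]
  unfold swRank d W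
  rw [Matrix.rank_eq_finrank_span_cols,
    (Submodule.equivMapOfInjective _ (ext0_injective (F := F) i) _).finrank_eq,
    Submodule.map_span]
  exact congrArg (fun s => finrank F (span F s)) hset

lemma W_succ (A : Matrix (Fin n) (Fin n) F) (i : Fin n) (m : ℕ) (hm : m < n) :
    W A i (m + 1) =
      Submodule.span F (insert (tcol A i ⟨m, hm⟩) (tcol A i '' {j' : Fin n | j'.val < m})) := by
  unfold W
  congr 1
  have hs : {j' : Fin n | j'.val < m + 1} = insert ⟨m, hm⟩ {j' : Fin n | j'.val < m} := by
    ext x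
    simp only [Set.mem_setOf_eq, Set.mem_insert_iff, Fin.ext_iff]
    omega
  rw [hs, Set.image_insert_eq]

lemma finrank_span_singleton_le' (x : Fin n → F) : finrank F (F ∙ x) ≤ 1 := by
  by_cases h : x = 0
  · rw [h, Submodule.span_zero_singleton]
    simp
  · exact (finrank_span_singleton h).le

lemma d_succ (A : Matrix (Fin n) (Fin n) F) (i : Fin n) (m : ℕ) (hm : m < n) :
    d A i (m + 1) = d A i m + (if tcol A i ⟨m, hm⟩ ∈ W A i m then 0 else 1) := by
  by_cases h : tcol A i ⟨m, hm⟩ ∈ W A i m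
  · rw [if_pos h, add_zero]
    unfold d
    rw [W_succ A i m hm, Submodule.span_insert_eq_span h]
    rfl
  · rw [if_neg h]
    have h1 : W A i m < W A i (m + 1) := by
      rw [W_succ A i m hm]
      refine lt_of_le_of_ne (Submodule.span_mono (Set.subset_insert _ _)) fun he => h ?_
      have hx : tcol A i ⟨m, hm⟩ ∈
          Submodule.span F (insert (tcol A i ⟨m, hm⟩) (tcol A i '' {j' : Fin n | j'.val < m})) :=
        Submodule.subset_span (Set.mem_insert _ _)
      rwa [← he] at hx
    have h2 : d A i (m + 1) ≤ 1 + d A i m := by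
      unfold d
      rw [W_succ A i m hm, Submodule.span_insert]
      exact (Submodule.finrank_add_le_finrank_add_finrank _ _).trans
        (Nat.add_le_add_right (finrank_span_singleton_le' _) _)
    have h3 : d A i m < d A i (m + 1) := Submodule.finrank_lt_finrank_of_lt h1
    omega

/-- Zero out rows `< i'`. -/
def trunc (i' : Fin n) : (Fin n → F) →ₗ[F] (Fin n → F) where
  toFun f a := if i' ≤ a then f a else 0
  map_add' f g := by funext a; by_cases h : i' ≤ a <;> simp [h]
  map_smul' c f := by funext a; by_cases h : i' ≤ a <;> simp [h]

lemma trunc_tcol (A : Matrix (Fin n) (Fin n) F) {i i' : Fin n} (h : i ≤ i') (j' : Fin n) :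
    trunc i' (tcol A i j') = tcol A i' j' := by
  funext a
  by_cases ha : i' ≤ a
  · simp [trunc, tcol, ha, h.trans ha]
  · simp [trunc, tcol, ha]

lemma mem_W_mono (A : Matrix (Fin n) (Fin n) F) {i i' : Fin n} (h : i ≤ i') {j' : Fin n} {m : ℕ}
    (hmem : tcol A i j' ∈ W A i m) : tcol A i' j' ∈ W A i' m := by
  have h1 : trunc (F := F) i' (tcol A i j') ∈ (W A i m).map (trunc i') :=
    Submodule.mem_map_of_mem hmem
  rw [trunc_tcol A h] at h1
  have h2 : (W A i m).map (trunc (F := F) i') = W A i' m := by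
    unfold W
    rw [Submodule.map_span, Set.image_image]
    congr 1
    exact Set.image_congr fun x _ => trunc_tcol A h x
  rwa [h2] at h1

lemma P_zero {A : Matrix (Fin n) (Fin n) F} (hA : IsUnit A) (j : Fin n) :
    tcol A ⟨0, j.pos⟩ j ∉ W A ⟨0, j.pos⟩ j.val := by
  have hco : tcol A ⟨0, j.pos⟩ = Aᵀ := by
    funext j' a
    simp [tcol, Fin.le_def]
  unfold W
  rw [hco]
  exact (Matrix.linearIndependent_cols_iff_isUnit.mpr hA).notMem_span_image
    (by simp)

/-- The permutation: `sigma0 hA j` is the largest `i` such that the truncated column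
`tcol A i j` is not in the span of the previous truncated columns. -/
noncomputable def sigma0 {A : Matrix (Fin n) (Fin n) F} (hA : IsUnit A) (j : Fin n) : Fin n :=
  (Finset.univ.filter (fun i => tcol A i j ∉ W A i j.val)).max'
    ⟨⟨0, j.pos⟩, Finset.mem_filter.mpr ⟨Finset.mem_univ _, P_zero hA j⟩⟩

lemma P_iff {A : Matrix (Fin n) (Fin n) F} (hA : IsUnit A) (i j : Fin n) :
    tcol A i j ∉ W A i j.val ↔ i ≤ sigma0 hA j := by
  constructor
  · intro h
    exact Finset.le_max' _ i (Finset.mem_filter.mpr ⟨Finset.mem_univ _, h⟩)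
  · intro h hmem
    have hmax := Finset.max'_mem (Finset.univ.filter
      (fun i => tcol A i j ∉ W A i j.val))
      ⟨⟨0, j.pos⟩, Finset.mem_filter.mpr ⟨Finset.mem_univ _, P_zero hA j⟩⟩
    rw [Finset.mem_filter] at hmax
    exact hmax.2 (mem_W_mono A h hmem)

/-- Number of `j' < m` (as naturals) with `i ≤ f j'`. -/
noncomputable def cnt (f : Fin n → Fin n) (i : Fin n) (m : ℕ) : ℕ :=
  (Finset.univ.filter (fun j' : Fin n => j'.val < m ∧ i ≤ f j')).card

lemma cnt_zero (f : Fin n → Fin n) (i : Fin n) : cnt f i 0 = 0 := by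
  unfold cnt
  simp

lemma cnt_succ (f : Fin n → Fin n) (i : Fin n) (m : ℕ) (hm : m < n) :
    cnt f i (m + 1) = cnt f i m + (if i ≤ f ⟨m, hm⟩ then 1 else 0) := by
  unfold cnt
  by_cases hi : i ≤ f ⟨m, hm⟩
  · rw [if_pos hi]
    have hset : Finset.univ.filter (fun j' : Fin n => j'.val < m + 1 ∧ i ≤ f j') =
        insert ⟨m, hm⟩ (Finset.univ.filter (fun j' : Fin n => j'.val < m ∧ i ≤ f j')) := by
      ext x
      simp only [Finset.mem_filter, Finset.mem_insert, Finset.mem_univ, true_and, Fin.ext_iff]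
      constructor
      · rintro ⟨h1, h2⟩
        rcases Nat.lt_succ_iff_lt_or_eq.mp h1 with h | h
        · exact Or.inr ⟨h, h2⟩
        · exact Or.inl h
      · rintro (h | ⟨h1, h2⟩)
        · have hx : x = ⟨m, hm⟩ := Fin.val_injective h
          subst hx
          exact ⟨Nat.lt_succ_self m, hi⟩
        · exact ⟨Nat.lt_succ_of_lt h1, h2⟩
    rw [hset, Finset.card_insert_of_notMem (by simp)]
  · rw [if_neg hi, add_zero]
    congr 1
    ext x
    simp only [Finset.mem_filter, Finset.mem_univ, true_and]
    constructor
    · rintro ⟨h1, h2⟩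
      rcases Nat.lt_succ_iff_lt_or_eq.mp h1 with h | h
      · exact ⟨h, h2⟩
      · have hx : x = ⟨m, hm⟩ := Fin.val_injective h
        exact absurd (hx ▸ h2) hi
    · rintro ⟨h1, h2⟩
      exact ⟨Nat.lt_succ_of_lt h1, h2⟩

lemma d_eq_cnt {A : Matrix (Fin n) (Fin n) F} (hA : IsUnit A) :
    ∀ m ≤ n, ∀ i, d A i m = cnt (sigma0 hA) i m := by
  intro m
  induction m with
  | zero =>
    intro _ i
    rw [cnt_zero]
    unfold d W
    have : {j' : Fin n | j'.val < 0} = (∅ : Set (Fin n)) := by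
      ext x; simp
    rw [this]
    simp
  | succ m ih =>
    intro hm i
    have hm' : m < n := hm
    rw [d_succ A i m hm', cnt_succ _ i m hm', ih (Nat.le_of_lt hm') i]
    congr 1
    have := P_iff hA i ⟨m, hm'⟩
    by_cases h : tcol A i ⟨m, hm'⟩ ∈ W A i m
    · rw [if_pos h, if_neg]
      intro hle
      exact (this.mpr hle) h
    · rw [if_neg h, if_pos (this.mp h)]

lemma d_n {A : Matrix (Fin n) (Fin n) F} (hA : IsUnit A) (i : Fin n) :
    d A i n = n - i.val := by
  have hn : 0 < n := i.pos
  set jl : Fin n := ⟨n - 1, by omega⟩ with hjl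
  have h1 : swRank A i jl = d A i n := by
    rw [swRank_eq]
    congr 1
    simp [hjl]
    omega
  rw [← h1]
  unfold swRank
  have rowsA : LinearIndependent F (fun a : Fin n => A a) :=
    Matrix.linearIndependent_rows_iff_isUnit.mpr hA
  have sub : LinearIndependent F (fun a : {a : Fin n // i ≤ a} => A a.val) :=
    rowsA.comp _ Subtype.val_injective
  have hsurj : Function.Surjective (fun b : {b : Fin n // b ≤ jl} => (b : Fin n)) := by
    intro b
    have hb : b ≤ jl := by
      rw [Fin.le_def]
      have := b.isLt
      simp [hjl]
      omega
    exact ⟨⟨b, hb⟩, rfl⟩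
  have hker : LinearMap.ker (LinearMap.funLeft F F
      (fun b : {b : Fin n // b ≤ jl} => (b : Fin n))) = ⊥ :=
    LinearMap.ker_eq_bot.mpr (LinearMap.funLeft_injective_of_surjective F F _ hsurj)
  have li : LinearIndependent F (A.submatrix (fun a : {a : Fin n // i ≤ a} => (a : Fin n))
      (fun b : {b : Fin n // b ≤ jl} => (b : Fin n))) :=
    sub.map' _ hker
  rw [LinearIndependent.rank_matrix (M := A.submatrix (fun a : {a : Fin n // i ≤ a} => (a : Fin n))
      (fun b : {b : Fin n // b ≤ jl} => (b : Fin n))) li]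
  rw [Fintype.card_congr (Equiv.subtypeEquivRight
    (fun x : Fin n => (Set.mem_Ici : x ∈ Set.Ici i ↔ i ≤ x).symm))]
  rw [Fintype.card_Ici]
  exact Fin.card_Ici i

lemma cnt_n (f : Fin n → Fin n) (i : Fin n) :
    cnt f i n = (Finset.univ.filter (fun j' => i ≤ f j')).card := by
  unfold cnt
  congr 1
  ext x
  simp [x.isLt]

lemma fiber_card {A : Matrix (Fin n) (Fin n) F} (hA : IsUnit A) (i : Fin n) :
    (Finset.univ.filter (fun j' => sigma0 hA j' = i)).card = 1 := by
  set g := sigma0 hA with hg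
  have key : ∀ i' : Fin n, (Finset.univ.filter (fun j' => i' ≤ g j')).card = n - i'.val := by
    intro i'
    rw [← cnt_n g i', hg, ← d_eq_cnt hA n le_rfl i', d_n hA i']
  have hle : (Finset.univ.filter (fun j' => i ≤ g j')).card = n - i.val := key i
  have hlt : (Finset.univ.filter (fun j' => i < g j')).card = n - 1 - i.val := by
    by_cases hi : i.val + 1 < n
    · have hset : (Finset.univ.filter (fun j' => i < g j')) =
          (Finset.univ.filter (fun j' => (⟨i.val + 1, hi⟩ : Fin n) ≤ g j')) := by
        ext x
        simp only [Finset.mem_filter, Finset.mem_univ, true_and, Fin.lt_def, Fin.le_def]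
        omega
      rw [hset, key ⟨i.val + 1, hi⟩]
      show n - (i.val + 1) = n - 1 - i.val
      omega
    · have hset : (Finset.univ.filter (fun j' => i < g j')) = ∅ := by
        ext x
        simp only [Finset.mem_filter, Finset.mem_univ, true_and, Finset.notMem_empty,
          iff_false]
        intro hlt'
        rw [Fin.lt_def] at hlt'
        have := (g x).isLt
        omega
      rw [hset, Finset.card_empty]
      omega
  have hsub : (Finset.univ.filter (fun j' => i < g j')) ⊆
      (Finset.univ.filter (fun j' => i ≤ g j')) := by
    intro x hx
    rw [Finset.mem_filter] at hx ⊢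
    exact ⟨hx.1, le_of_lt hx.2⟩
  have hdiff : (Finset.univ.filter (fun j' => g j' = i)) =
      (Finset.univ.filter (fun j' => i ≤ g j')) \ (Finset.univ.filter (fun j' => i < g j')) := by
    ext x
    simp only [Finset.mem_sdiff, Finset.mem_filter, Finset.mem_univ, true_and, not_lt]
    constructor
    · intro h
      exact ⟨h.ge, h.le⟩
    · rintro ⟨h1, h2⟩
      exact le_antisymm h2 h1
  rw [hdiff, Finset.card_sdiff_of_subset hsub, hle, hlt]
  have := i.isLt
  omega

lemma sigma0_injective {A : Matrix (Fin n) (Fin n) F} (hA : IsUnit A) :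
    Function.Injective (sigma0 hA) := by
  intro a b hab
  have h1 : a ∈ Finset.univ.filter (fun j' => sigma0 hA j' = sigma0 hA b) :=
    Finset.mem_filter.mpr ⟨Finset.mem_univ _, hab⟩
  have h2 : b ∈ Finset.univ.filter (fun j' => sigma0 hA j' = sigma0 hA b) :=
    Finset.mem_filter.mpr ⟨Finset.mem_univ _, rfl⟩
  exact Finset.card_le_one.mp (fiber_card hA (sigma0 hA b)).le _ h1 _ h2

end BruhatAux

/-- For an invertible matrix `A` there is a unique permutation `σ` such that
every southwest rank of `A` counts the points of the graph of `σ` in the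
corresponding lower-left region. -/
theorem exists_unique_bruhat_permutation {F : Type*} [Field F] {n : ℕ}
    (A : Matrix (Fin n) (Fin n) F) (hA : IsUnit A) :
    ∃! σ : Equiv.Perm (Fin n),
      ∀ (i j : Fin n),
        swRank A i j = Nat.card {j' : Fin n // j' ≤ j ∧ i ≤ σ j'} := by
  classical
  have hbij : Function.Bijective (BruhatAux.sigma0 hA) :=
    Finite.injective_iff_bijective.mp (BruhatAux.sigma0_injective hA)
  set σ : Equiv.Perm (Fin n) := Equiv.ofBijective _ hbij with hσdef
  have hcnt : ∀ (ρ : Equiv.Perm (Fin n)) (i j : Fin n),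
      Nat.card {j' : Fin n // j' ≤ j ∧ i ≤ ρ j'} = BruhatAux.cnt (fun x => ρ x) i (j.val + 1) := by
    intro ρ i j
    rw [Nat.card_eq_fintype_card, Fintype.card_subtype]
    unfold BruhatAux.cnt
    congr 1
    ext x
    simp only [Finset.mem_filter, Finset.mem_univ, true_and, Fin.le_def, Nat.lt_succ_iff]
  have hσfun : (fun x => σ x) = BruhatAux.sigma0 hA := rfl
  have hprop : ∀ i j : Fin n, swRank A i j = Nat.card {j' : Fin n // j' ≤ j ∧ i ≤ σ j'} := by
    intro i j
    rw [hcnt σ i j, hσfun, BruhatAux.swRank_eq, BruhatAux.d_eq_cnt hA (j.val + 1) j.isLt i]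
  refine ⟨σ, hprop, ?_⟩
  intro τ hτ
  have heq : ∀ (i j : Fin n),
      BruhatAux.cnt (fun x => τ x) i (j.val + 1) = BruhatAux.cnt (fun x => σ x) i (j.val + 1) := by
    intro i j
    rw [← hcnt, ← hcnt, ← hτ i j, ← hprop i j]
  have hallm : ∀ (i : Fin n) (m : ℕ), m ≤ n →
      BruhatAux.cnt (fun x => τ x) i m = BruhatAux.cnt (fun x => σ x) i m := by
    intro i m hm
    match m, hm with
    | 0, _ => rw [BruhatAux.cnt_zero, BruhatAux.cnt_zero]
    | (k + 1), hm => exact heq i ⟨k, hm⟩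
  apply Equiv.ext
  intro j
  have hind : ∀ i : Fin n, (if i ≤ τ j then 1 else 0) = (if i ≤ σ j then 1 else 0) := by
    intro i
    have ht := BruhatAux.cnt_succ (fun x => τ x) i j.val j.isLt
    have hs := BruhatAux.cnt_succ (fun x => σ x) i j.val j.isLt
    have hje : (⟨j.val, j.isLt⟩ : Fin n) = j := rfl
    rw [hje] at ht hs
    have h2 := hallm i j.val (le_of_lt j.isLt)
    have h3 := heq i j
    omega
  have hts : τ j ≤ σ j := by
    by_contra hcon
    have := hind (τ j)
    rw [if_pos le_rfl, if_neg hcon] at this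
    exact one_ne_zero this
  have hst : σ j ≤ τ j := by
    by_contra hcon
    have := hind (σ j)
    rw [if_pos le_rfl] at this
    rw [if_neg hcon] at this
    exact one_ne_zero this.symm
  exact le_antisymm hts hst
end

section
/- Let F be a field and consider based finite-dimensional F-vector spaces C_{k+1}, C_k with a linear map ∂ : C_{k+1} → C_k. Suppose p is a basis vector of C_{k+1} whose ∂-image, written in the basis of C_k, has a nonzero coefficient on some basis vector q. Then for any conjugation δ = T'⁻¹ ∘ ∂ ∘ T by invertible upper triangular matrices T, T', there exists a basis vector p' of C_{k+1} with index ≤ index of p and a basis vector q' with index ≥ index of q such that the coefficient of q' in δ(p') is nonzero. (Triangular equivalence cannot move support strictly up in the source or strictly down in the target simultaneously for all entries.) -/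
/-- Triangular equivalence cannot move the support strictly up in the source
and strictly down in the target: if `M i j ≠ 0` then `S⁻¹ * M * T` has a
nonzero entry at some position `(i', j')` with `i' ≥ i` and `j' ≤ j`, for
`S, T` invertible upper triangular. -/
theorem support_southwest_persists {F : Type*} [Field F] {n m : ℕ}
    (M : Matrix (Fin n) (Fin m) F)
    (S : Matrix (Fin n) (Fin n) F) (T : Matrix (Fin m) (Fin m) F)
    (hS : S.BlockTriangular id) (hT : T.BlockTriangular id)
    (hSu : IsUnit S) (hTu : IsUnit T)
    (i : Fin n) (j : Fin m) (hij : M i j ≠ 0) :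
    ∃ (i' : Fin n) (j' : Fin m), i ≤ i' ∧ j' ≤ j ∧ (S⁻¹ * M * T) i' j' ≠ 0 := by
  by_contra h
  push_neg at h
  apply hij
  haveI := hTu.invertible
  have hT' : (T⁻¹).BlockTriangular id :=
    Matrix.blockTriangular_inv_of_blockTriangular hT
  have hM : M = S * (S⁻¹ * M * T) * T⁻¹ := by
    rw [Matrix.mul_assoc S, Matrix.mul_assoc (S⁻¹ * M), Matrix.mul_nonsing_inv _ (Matrix.isUnit_iff_isUnit_det T |>.mp hTu),
      Matrix.mul_one, ← Matrix.mul_assoc,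
      Matrix.mul_nonsing_inv _ (Matrix.isUnit_iff_isUnit_det S |>.mp hSu), Matrix.one_mul]
  rw [hM]
  simp only [Matrix.mul_apply]
  apply Finset.sum_eq_zero
  intro j' _
  rcases le_or_gt j' j with hj | hj
  · apply mul_eq_zero_of_left
    apply Finset.sum_eq_zero
    intro i' _
    rcases le_or_gt i i' with hi | hi
    · exact mul_eq_zero_of_right _ (h i' j' hi hj)
    · exact mul_eq_zero_of_left (hS hi) _
  · exact mul_eq_zero_of_right _ (hT' hj)
end

section
/- Let F be a field and let ∂ : F^m → F^n be a linear map (matrix), with both F^m and F^n carrying ordered standard bases. Suppose ∂' = S⁻¹ ∂ T with S ∈ GL(n,F), T ∈ GL(m,F) invertible upper triangular, and both ∂ and ∂' are simple matrices. Then the pairing they define is the same: for every column j, the j-th column of ∂ is e_i if and only if the j-th column of ∂' is e_i, and the j-th column of ∂ is zero iff that of ∂' is zero. (This is the uniqueness of the Barannikov coupling, restated.) -/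
private lemma diag_ne_zero {F : Type*} [Field F] {m : ℕ}
    (T : Matrix (Fin m) (Fin m) F) (hT : T.BlockTriangular id)
    (hTu : IsUnit T.det) : ∀ i, T i i ≠ 0 := by
  have hdet : T.det = ∏ i, T i i := Matrix.det_of_upperTriangular hT
  have h0 : (∏ i, T i i) ≠ 0 := hdet ▸ hTu.ne_zero
  intro i
  exact fun hzero => h0 (Finset.prod_eq_zero (Finset.mem_univ i) hzero)

/-- If column `j` of a simple matrix `M` is `e_i`, then `(M*T) i j = T j j`. -/
private lemma mulT_entry {F : Type*} [Field F] {n m : ℕ}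
    (M : Matrix (Fin n) (Fin m) F) (hM : M.IsSimpleCol)
    (T : Matrix (Fin m) (Fin m) F) {i : Fin n} {j : Fin m}
    (hcol : (fun a => M a j) = Pi.single i (1 : F)) :
    (M * T) i j = T j j := by
  have hMij : M i j = 1 := by
    have := congrFun hcol i
    simpa using this
  rw [Matrix.mul_apply]
  rw [Finset.sum_eq_single j]
  · rw [hMij, one_mul]
  · intro k _ hk
    rcases hM.1 k with hz | ⟨a, ha⟩
    · have : M i k = 0 := congrFun hz i
      rw [this, zero_mul]
    · rcases eq_or_ne a i with rfl | hne
      · -- then column k equals column j, contradiction with k ≠ j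
        exfalso
        apply hk
        apply hM.2 k j
        · rw [ha]
          intro hcontra
          have := congrFun hcontra a
          simp at this
        · rw [ha, hcol]
      · have : M i k = 0 := by
          have := congrFun ha i
          simpa [Pi.single_eq_of_ne (Ne.symm hne)] using this
        rw [this, zero_mul]
  · intro hj; exact absurd (Finset.mem_univ j) hj

/-- Key one-sided lemma. -/
private lemma aux_key {F : Type*} [Field F] {n m : ℕ}
    (M M' : Matrix (Fin n) (Fin m) F) (hM : M.IsSimpleCol)
    (S : Matrix (Fin n) (Fin n) F) (T : Matrix (Fin m) (Fin m) F)
    (hS : S.BlockTriangular id) (hTd : ∀ i, T i i ≠ 0)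
    (heq : S * M' = M * T) :
    (∀ j : Fin m, (fun a => M' a j) = 0 → (fun a => M a j) = 0) ∧
    (∀ (j : Fin m) (i i' : Fin n), (fun a => M a j) = Pi.single i (1 : F) →
      (fun a => M' a j) = Pi.single i' (1 : F) → i ≤ i') := by
  constructor
  · intro j hz
    by_contra hne
    rcases hM.1 j with h0 | ⟨i, hi⟩
    · exact hne h0
    have h1 : (M * T) i j = T j j := mulT_entry M hM T hi
    have h2 : (S * M') i j = 0 := by
      rw [Matrix.mul_apply]
      apply Finset.sum_eq_zero
      intro k _
      have : M' k j = 0 := congrFun hz k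
      rw [this, mul_zero]
    rw [heq, h1] at h2
    exact hTd j h2
  · intro j i i' hi hi'
    have h1 : (M * T) i j = T j j := mulT_entry M hM T hi
    have h2 : (S * M') i j = S i i' := by
      rw [Matrix.mul_apply]
      rw [Finset.sum_eq_single i']
      · have : M' i' j = 1 := by simpa using congrFun hi' i'
        rw [this, mul_one]
      · intro k _ hk
        have : M' k j = 0 := by
          simpa [Pi.single_eq_of_ne hk] using congrFun hi' k
        rw [this, mul_zero]
      · intro hj; exact absurd (Finset.mem_univ i') hj
    rw [heq, h1] at h2
    by_contra hlt
    push_neg at hlt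
    have : S i i' = 0 := hS (show id i' < id i from hlt)
    rw [this] at h2
    exact hTd j h2

/-- Uniqueness of the Barannikov coupling: if two simple matrices are
triangularly equivalent, they define the same pairing — each column is the
same standard basis vector, or zero, in both. -/
theorem simple_matrices_same_coupling {F : Type*} [Field F] {n m : ℕ}
    (M M' : Matrix (Fin n) (Fin m) F)
    (hM : M.IsSimpleCol) (hM' : M'.IsSimpleCol)
    (S : Matrix (Fin n) (Fin n) F) (T : Matrix (Fin m) (Fin m) F)
    (hS : S.BlockTriangular id) (hT : T.BlockTriangular id)
    (hSu : IsUnit S) (hTu : IsUnit T)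
    (h : M' = S⁻¹ * M * T) :
    (∀ (j : Fin m) (i : Fin n),
        ((fun a => M a j) = Pi.single i (1 : F) ↔
          (fun a => M' a j) = Pi.single i (1 : F))) ∧
    (∀ j : Fin m, (fun a => M a j) = 0 ↔ (fun a => M' a j) = 0) := by
  have hSd : IsUnit S.det := (Matrix.isUnit_iff_isUnit_det S).mp hSu
  have hTd : IsUnit T.det := (Matrix.isUnit_iff_isUnit_det T).mp hTu
  haveI : Invertible S := S.invertibleOfIsUnitDet hSd
  haveI : Invertible T := T.invertibleOfIsUnitDet hTd
  have hSinv : S⁻¹.BlockTriangular id := Matrix.blockTriangular_inv_of_blockTriangular hS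
  have hTinv : T⁻¹.BlockTriangular id := Matrix.blockTriangular_inv_of_blockTriangular hT
  have hTdiag : ∀ i, T i i ≠ 0 := diag_ne_zero T hT hTd
  have hTinvdet : IsUnit T⁻¹.det := by
    rw [Matrix.det_nonsing_inv]
    exact isUnit_ringInverse.mpr hTd
  have hTinvdiag : ∀ i, T⁻¹ i i ≠ 0 := diag_ne_zero T⁻¹ hTinv hTinvdet
  -- S * M' = M * T
  have heq1 : S * M' = M * T := by
    rw [h, ← Matrix.mul_assoc, ← Matrix.mul_assoc, Matrix.mul_nonsing_inv S hSd, Matrix.one_mul]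
  -- S⁻¹ * M = M' * T⁻¹
  have heq2 : S⁻¹ * M = M' * T⁻¹ := by
    rw [h, Matrix.mul_assoc, Matrix.mul_nonsing_inv T hTd, Matrix.mul_one]
  obtain ⟨a1, b1⟩ := aux_key M M' hM S T hS hTdiag heq1
  obtain ⟨a2, b2⟩ := aux_key M' M hM' S⁻¹ T⁻¹ hSinv hTinvdiag heq2
  have hsne : ∀ (i : Fin n), (Pi.single i (1 : F)) ≠ (0 : Fin n → F) := by
    intro i hc
    have := congrFun hc i
    simp at this
  constructor
  · intro j i
    constructor
    · intro hi
      have hne' : (fun a => M' a j) ≠ 0 := by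
        intro hz
        exact hsne i (hi ▸ a1 j hz)
      rcases hM'.1 j with h0 | ⟨i', hi'⟩
      · exact absurd h0 hne'
      have h1 : i ≤ i' := b1 j i i' hi hi'
      have h2 : i' ≤ i := b2 j i' i hi' hi
      obtain rfl : i = i' := le_antisymm h1 h2
      exact hi'
    · intro hi'
      have hne : (fun a => M a j) ≠ 0 := by
        intro hz
        exact hsne i (hi' ▸ a2 j hz)
      rcases hM.1 j with h0 | ⟨i0, hi0⟩
      · exact absurd h0 hne
      have h1 : i0 ≤ i := b1 j i0 i hi0 hi'
      have h2 : i ≤ i0 := b2 j i i0 hi' hi0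
      obtain rfl : i0 = i := le_antisymm h1 h2
      exact hi0
  · intro j
    exact ⟨fun hz => a2 j hz, fun hz => a1 j hz⟩
end
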